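/- The data externality imposed on consumer i equals DE_i(S) = (1/2)(G(S) - G(S_i)) - (3/8)G(S_{-i}), i.e., U_i(S, S_{-i}) - U_i(S_i, ∅) = (1/2)·var[E[w_i|S]] - (1/2)·var[E[w_i|S_i]] - (3/8)·var[E[w_i|S_{-i}]]. -/

import Mathlib

open MeasureTheory ProbabilityTheory

lemma memℒp_condexp_two {Ω : Type*} [m0 : MeasurableSpace Ω]
    (μ : Measure Ω) [IsProbabilityMeasure μ] {m : MeasurableSpace Ω} (hm : m ≤ m0)
    {w : Ω → ℝ} (hw : MemLp w 2 μ) : MemLp (μ[w|m]) 2 μ := by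
  haveI : SigmaFinite (μ.trim hm) := inferInstance
  set f : Lp ℝ 2 μ := hw.toLp w with hf
  have heq : (condExpL2 ℝ ℝ hm f : Ω → ℝ) =ᵐ[μ] μ[w|m] := by
    refine ae_eq_condExp_of_forall_setIntegral_eq hm (hw.integrable one_le_two) ?_ ?_ ?_
    · intro s _ hμs
      exact integrableOn_condExpL2_of_measure_ne_top hm hμs.ne f
    · intro s hs hμs
      rw [integral_condExpL2_eq hm f hs hμs.ne]
      exact integral_congr_ae (ae_restrict_of_ae (MemLp.coeFn_toLp hw))
    · exact aestronglyMeasurable_condExpL2 hm f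
  exact (Lp.memLp _).ae_eq heq

/-- The data externality imposed on consumer `i`:
with `U_i(Y_i,Y) = (1/2)·E[(E[w|Y_i])² - (3/4)(E[w|Y])²]`,
`DE_i(S) = U_i(S, S_{-i}) - U_i(S_i, ∅)
 = (1/2)var[E[w|S]] - (1/2)var[E[w|S_i]] - (3/8)var[E[w|S_{-i}]]`. -/
theorem data_externality_formula
    {Ω : Type*} [m0 : MeasurableSpace Ω] (μ : Measure Ω) [IsProbabilityMeasure μ]
    (mS mSmi mSi : MeasurableSpace Ω)
    (hmS : mS ≤ m0) (hmSmi : mSmi ≤ mS) (hmSi : mSi ≤ mS)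
    (w : Ω → ℝ) (hw : MemLp w 2 μ) :
    (1 / 2) * ∫ ω, ((μ[w|mS]) ω ^ 2 - (3 / 4) * (μ[w|mSmi]) ω ^ 2) ∂μ -
      (1 / 2) * ∫ ω, ((μ[w|mSi]) ω ^ 2
        - (3 / 4) * (μ[w|(⊥ : MeasurableSpace Ω)]) ω ^ 2) ∂μ =
    (1 / 2) * variance (μ[w|mS]) μ - (1 / 2) * variance (μ[w|mSi]) μ
      - (3 / 8) * variance (μ[w|mSmi]) μ := by
  have hwi : Integrable w μ := hw.integrable one_le_two
  have hS : MemLp (μ[w|mS]) 2 μ := @memℒp_condexp_two Ω m0 μ _ mS hmS w hw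
  have hSmi : MemLp (μ[w|mSmi]) 2 μ := @memℒp_condexp_two Ω m0 μ _ mSmi (hmSmi.trans hmS) w hw
  have hSi : MemLp (μ[w|mSi]) 2 μ := @memℒp_condexp_two Ω m0 μ _ mSi (hmSi.trans hmS) w hw
  -- means of conditional expectations equal mean of w
  have hmeanS : ∫ ω, (μ[w|mS]) ω ∂μ = ∫ ω, w ω ∂μ := integral_condExp hmS
  have hmeanSmi : ∫ ω, (μ[w|mSmi]) ω ∂μ = ∫ ω, w ω ∂μ :=
    integral_condExp (hmSmi.trans hmS)
  have hmeanSi : ∫ ω, (μ[w|mSi]) ω ∂μ = ∫ ω, w ω ∂μ :=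
    integral_condExp (hmSi.trans hmS)
  have hbot : μ[w|(⊥ : MeasurableSpace Ω)] = fun _ => ∫ x, w x ∂μ := condExp_bot w
  -- expand integrals
  have h1 : ∫ ω, ((μ[w|mS]) ω ^ 2 - (3 / 4) * (μ[w|mSmi]) ω ^ 2) ∂μ
      = ∫ ω, (μ[w|mS]) ω ^ 2 ∂μ - (3 / 4) * ∫ ω, (μ[w|mSmi]) ω ^ 2 ∂μ := by
    rw [integral_sub hS.integrable_sq (hSmi.integrable_sq.const_mul _),
      integral_const_mul]
  have h2 : ∫ ω, ((μ[w|mSi]) ω ^ 2 - (3 / 4) * (μ[w|(⊥ : MeasurableSpace Ω)]) ω ^ 2) ∂μ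
      = ∫ ω, (μ[w|mSi]) ω ^ 2 ∂μ - (3 / 4) * (∫ x, w x ∂μ) ^ 2 := by
    rw [hbot]
    rw [integral_sub hSi.integrable_sq ((integrable_const _).const_mul _)]
    simp [integral_const, measure_univ]
  have hvS := variance_eq_sub hS
  have hvSmi := variance_eq_sub hSmi
  have hvSi := variance_eq_sub hSi
  simp only [Pi.pow_apply] at hvS hvSmi hvSi
  rw [h1, h2, hvS, hvSmi, hvSi, hmeanS, hmeanSmi, hmeanSi]
  ring
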